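/- Let G = (V, w) be a connected n-vertex weighted graph (λ(G) > 0) and let A ∈ ℝ^{k×(n choose 2)} be a connectivity certificate for G, i.e., for every nonnegative w' : V^(2) → ℝ with Aw' = Aw one has λ(V,w') > 0. Then there exists τ > 0 such that for every nonnegative w' with Aw' = Aw, λ(V,w') ≥ τ. -/

import Mathlib

open Finset Matrix

/-- The set of edge slots: 2-element subsets of the vertex set `Fin n`. -/
abbrev EdgeSlot (n : ℕ) := {e : Finset (Fin n) // e.card = 2}

/-- Weight of the cut with shore `S`: sum of weights of edge slots with exactly
one endpoint in `S`. -/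
noncomputable def cutWeight (n : ℕ) (w : EdgeSlot n → ℝ) (S : Finset (Fin n)) : ℝ :=
  ∑ e : EdgeSlot n, if (e.1 ∩ S).card = 1 then w e else 0

/-- `λ(G)`: the minimum cut weight over all shores `∅ ≠ S ⊊ V`. -/
noncomputable def minCutVal (n : ℕ) (w : EdgeSlot n → ℝ) : ℝ :=
  sInf {x : ℝ | ∃ S : Finset (Fin n), S.Nonempty ∧ S ≠ Finset.univ ∧ cutWeight n w S = x}

/-- The at-least-τ linear-query certificate complexity: the least `k` such that some
`k`-row query matrix `A` certifies that every nonnegative `w'` consistent with the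
answers on `w` has minimum cut value at least `τ`. -/
noncomputable def atLeastCert (n : ℕ) (τ : ℝ) (w : EdgeSlot n → ℝ) : ℕ :=
  sInf {k : ℕ | ∃ A : Matrix (Fin k) (EdgeSlot n) ℝ,
    ∀ w' : EdgeSlot n → ℝ, (∀ e, 0 ≤ w' e) → A.mulVec w = A.mulVec w' →
      τ ≤ minCutVal n w'}

/-- The minimum-cut linear-query certificate complexity. -/
noncomputable def mincutCert (n : ℕ) (w : EdgeSlot n → ℝ) : ℕ :=
  sInf {k : ℕ | ∃ A : Matrix (Fin k) (EdgeSlot n) ℝ,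
    ∀ w' : EdgeSlot n → ℝ, (∀ e, 0 ≤ w' e) → A.mulVec w = A.mulVec w' →
      minCutVal n w' = minCutVal n w}

/-- The connectivity linear-query certificate complexity. -/
noncomputable def conCert (n : ℕ) (w : EdgeSlot n → ℝ) : ℕ :=
  sInf {k : ℕ | ∃ A : Matrix (Fin k) (EdgeSlot n) ℝ,
    ∀ w' : EdgeSlot n → ℝ, (∀ e, 0 ≤ w' e) → A.mulVec w = A.mulVec w' →
      (0 < minCutVal n w' ↔ 0 < minCutVal n w)}

/-- Row indices of the universal cut-edge incidence matrix: nonempty sets of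
vertices not containing vertex `1` (represented as `0 : Fin n`). -/
abbrev Shore (n : ℕ) [NeZero n] := {S : Finset (Fin n) // S.Nonempty ∧ (0 : Fin n) ∉ S}

/-- The universal cut-edge incidence matrix `M_n`. -/
noncomputable def Mn (n : ℕ) [NeZero n] : Matrix (Shore n) (EdgeSlot n) ℝ :=
  fun S e => if (e.1 ∩ S.1).card = 1 then 1 else 0

/-- `τ`-cut-rank of a graph: the minimum rank of a matrix `X ≤ M_n` (entrywise)
with every entry of `Xw` at least `τ`. -/
noncomputable def cutRank (n : ℕ) [NeZero n] (τ : ℝ) (w : EdgeSlot n → ℝ) : ℕ :=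
  sInf {r : ℕ | ∃ X : Matrix (Shore n) (EdgeSlot n) ℝ,
    (∀ S e, X S e ≤ Mn n S e) ∧ (∀ S, τ ≤ X.mulVec w S) ∧ X.rank = r}

/-- The weight vector of the `n`-cycle with unit weights. -/
noncomputable def cycleWeight (n : ℕ) [NeZero n] : EdgeSlot n → ℝ :=
  fun e => if ∃ i : Fin n, e.1 = {i, i + 1} then 1 else 0


/-! ### Auxiliary lemmas: finitely generated cones are closed -/

lemma cone_caratheodory {ι : Type*} [Fintype ι] {E : Type*} [AddCommGroup E] [Module ℝ E]
    (v : ι → E) (c : ι → ℝ) (hc : ∀ i, 0 ≤ c i) :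
    ∃ (s : Finset ι) (c' : ι → ℝ), (∀ i, 0 ≤ c' i) ∧ (∀ i ∉ s, c' i = 0) ∧
      LinearIndependent ℝ (fun i : s => v i) ∧ ∑ i, c' i • v i = ∑ i, c i • v i := by
  classical
  obtain ⟨N, hN⟩ : ∃ N, (Finset.univ.filter (fun i => c i ≠ 0)).card ≤ N :=
    ⟨_, le_refl _⟩
  induction N generalizing c with
  | zero =>
    have hemp : Finset.univ.filter (fun i => c i ≠ 0) = ∅ :=
      Finset.card_eq_zero.mp (Nat.le_zero.mp hN)
    refine ⟨∅, c, hc, fun i _ => ?_, linearIndependent_empty_type, rfl⟩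
    by_contra h
    have hmem : i ∈ Finset.univ.filter (fun i => c i ≠ 0) :=
      Finset.mem_filter.mpr ⟨Finset.mem_univ _, h⟩
    rw [hemp] at hmem
    exact absurd hmem (Finset.notMem_empty i)
  | succ N ih =>
    set s := Finset.univ.filter (fun i => c i ≠ 0) with hs
    by_cases hli : LinearIndependent ℝ (fun i : s => v i)
    · exact ⟨s, c, hc, fun i hi => by simpa [hs] using hi, hli, rfl⟩
    · -- get a nontrivial dependence supported on s with a positive coefficient
      obtain ⟨g, hgsum, j, hgj⟩ := Fintype.not_linearIndependent_iff.mp hli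
      -- extend to ι
      have key : ∀ g : s → ℝ, (∑ i : s, g i • v i.1 = 0) → (∃ j, g j ≠ 0) →
          (∃ j, 0 < g j) →
          ∃ (s' : Finset ι) (c' : ι → ℝ), (∀ i, 0 ≤ c' i) ∧ (∀ i ∉ s', c' i = 0) ∧
            LinearIndependent ℝ (fun i : s' => v i) ∧ ∑ i, c' i • v i = ∑ i, c i • v i := by
        intro g hgsum ⟨j, hgj⟩ ⟨jp, hjp⟩
        set d : ι → ℝ := fun i => if h : i ∈ s then g ⟨i, h⟩ else 0 with hd
        have hdsum : ∑ i, d i • v i = 0 := by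
          rw [← Finset.sum_filter_add_sum_filter_not Finset.univ (· ∈ s)]
          have h1 : ∀ i ∈ Finset.univ.filter (fun i => ¬ i ∈ s), d i • v i = 0 := by
            intro i hi
            simp only [Finset.mem_filter] at hi
            simp [hd, hi.2]
          rw [Finset.sum_congr rfl h1, Finset.sum_const_zero, add_zero]
          have h2 : Finset.univ.filter (· ∈ s) = s := by
            ext i; simp
          rw [h2, ← Finset.sum_attach s (fun i => d i • v i)]
          rw [← hgsum]
          apply Finset.sum_congr rfl
          intro i _
          simp [hd, i.2]
        have hdsupp : ∀ i, d i ≠ 0 → c i ≠ 0 := by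
          intro i hi
          by_contra h
          have : i ∉ s := by simp [hs, h]
          simp [hd, this] at hi
        -- positive part
        set F := Finset.univ.filter (fun i => 0 < d i) with hF
        have hFne : F.Nonempty := ⟨jp.1, by simp [hF, hd, jp.2, hjp]⟩
        set t := F.inf' hFne (fun i => c i / d i) with ht
        have ht0 : 0 ≤ t := by
          apply Finset.le_inf'
          intro i hi
          simp only [hF, Finset.mem_filter] at hi
          exact div_nonneg (hc i) hi.2.le
        set c'' : ι → ℝ := fun i => c i - t * d i with hc''
        have hc''nn : ∀ i, 0 ≤ c'' i := by
          intro i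
          rcases le_or_gt (d i) 0 with h | h
          · have : t * d i ≤ 0 := mul_nonpos_of_nonneg_of_nonpos ht0 h
            simp only [hc'']; linarith [hc i]
          · have hiF : i ∈ F := by simp [hF, h]
            have := Finset.inf'_le (fun i => c i / d i) hiF
            rw [← ht] at this
            have := (le_div_iff₀ h).mp this
            simp only [hc'']; linarith
        have hc''sum : ∑ i, c'' i • v i = ∑ i, c i • v i := by
          simp only [hc'', sub_smul, Finset.sum_sub_distrib]
          have hts : ∑ x : ι, (t * d x) • v x = t • ∑ x : ι, d x • v x := by
            rw [Finset.smul_sum]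
            exact Finset.sum_congr rfl fun x _ => (smul_smul t (d x) (v x)).symm
          rw [hts, hdsum, smul_zero, sub_zero]
        obtain ⟨i₀, hi₀F, hi₀⟩ := Finset.exists_mem_eq_inf' hFne (fun i => c i / d i)
        have hdi₀ : 0 < d i₀ := by simpa [hF] using hi₀F
        have hci₀ : c i₀ ≠ 0 := hdsupp i₀ (ne_of_gt hdi₀)
        have hc''i₀ : c'' i₀ = 0 := by
          have hrfl : c'' i₀ = c i₀ - t * d i₀ := rfl
          rw [hrfl, ht, hi₀]
          field_simp
          ring
        have hsub : Finset.univ.filter (fun i => c'' i ≠ 0) ⊂ s := by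
          rw [hs]
          constructor
          · intro i hi
            simp only [Finset.mem_filter, Finset.mem_univ, true_and] at hi ⊢
            by_contra h
            have hdi : d i = 0 := by
              by_contra hd0
              exact hdsupp i hd0 h
            apply hi
            simp [hc'', h, hdi]
          · intro hsub2
            have : i₀ ∈ Finset.univ.filter (fun i => c'' i ≠ 0) :=
              hsub2 (by simp [hci₀])
            simp [hc''i₀] at this
        have hcard : (Finset.univ.filter (fun i => c'' i ≠ 0)).card ≤ N := by
          have h1 := Finset.card_lt_card hsub
          omega
        obtain ⟨s', c', h1, h2, h3, h4⟩ := ih c'' hc''nn hcard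
        exact ⟨s', c', h1, h2, h3, h4.trans hc''sum⟩
      rcases lt_trichotomy (g j) 0 with h | h | h
      · exact key (-g) (by simpa [neg_smul] using hgsum) ⟨j, by simpa using hgj⟩
          ⟨j, by simpa using h⟩
      · exact absurd h hgj
      · exact key g hgsum ⟨j, hgj⟩ ⟨j, h⟩

lemma isClosed_finite_cone {ι : Type*} [Fintype ι] {E : Type*} [NormedAddCommGroup E]
    [NormedSpace ℝ E] (v : ι → E) :
    IsClosed {x : E | ∃ c : ι → ℝ, (∀ i, 0 ≤ c i) ∧ x = ∑ i, c i • v i} := by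
  classical
  have key : {x : E | ∃ c : ι → ℝ, (∀ i, 0 ≤ c i) ∧ x = ∑ i, c i • v i} =
      ⋃ s ∈ {s : Finset ι | LinearIndependent ℝ (fun i : s => v i)},
        (fun c : ↥s → ℝ => ∑ i : ↥s, c i • v i.1) ''
          {c | ∀ i, 0 ≤ c i} := by
    ext x
    simp only [Set.mem_setOf_eq, Set.mem_iUnion, Set.mem_image]
    constructor
    · rintro ⟨c, hc, rfl⟩
      obtain ⟨s, c', h1, h2, h3, h4⟩ := cone_caratheodory v c hc
      refine ⟨s, h3, fun i => c' i.1, fun i => h1 i.1, ?_⟩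
      rw [← h4, Finset.sum_coe_sort s (fun i => c' i • v i)]
      exact Finset.sum_subset (Finset.subset_univ s)
        (fun i _ hi => by rw [h2 i hi, zero_smul])
    · rintro ⟨s, hs, c, hc, rfl⟩
      refine ⟨fun i => if h : i ∈ s then c ⟨i, h⟩ else 0, fun i => ?_, ?_⟩
      · by_cases h : i ∈ s
        · simpa [h] using hc ⟨i, h⟩
        · simp [h]
      · have h1 : ∑ i : ι, (fun i => if h : i ∈ s then c ⟨i, h⟩ else 0) i • v i =
            ∑ i ∈ s, (if h : i ∈ s then c ⟨i, h⟩ else 0) • v i :=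
          (Finset.sum_subset (Finset.subset_univ s)
            (fun i _ hi => by simp only [dif_neg hi, zero_smul])).symm
        rw [h1, ← Finset.sum_coe_sort s]
        exact Finset.sum_congr rfl (fun i _ => by simp [i.2])
  rw [key]
  apply Set.Finite.isClosed_biUnion (Set.toFinite _)
  intro s hs
  have hli : LinearIndependent ℝ (fun i : s => v i) := hs
  set L : (↥s → ℝ) →ₗ[ℝ] E :=
    { toFun := fun c => ∑ i : ↥s, c i • v i.1
      map_add' := by
        intro a b
        simp [add_smul, Finset.sum_add_distrib]
      map_smul' := by
        intro m a
        simp [Finset.smul_sum, smul_smul] } with hL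
  have hinj : Function.Injective L := by
    rw [← LinearMap.ker_eq_bot]
    rw [LinearMap.ker_eq_bot']
    intro m hm
    have := Fintype.linearIndependent_iff.mp hli m hm
    funext i
    exact this i
  have hce := LinearMap.isClosedEmbedding_of_injective (LinearMap.ker_eq_bot.mpr hinj) (f := L)
  have horth : IsClosed {c : ↥s → ℝ | ∀ i, 0 ≤ c i} := by
    have : {c : ↥s → ℝ | ∀ i, 0 ≤ c i} = ⋂ i, {c | 0 ≤ c i} :=
      by ext c; simp [Set.mem_iInter]
    rw [this]
    exact isClosed_iInter fun i => isClosed_le continuous_const (continuous_apply i)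
  exact hce.isClosedMap _ horth

lemma isClosed_image_orthant {ι : Type*} [Fintype ι] {E : Type*} [NormedAddCommGroup E]
    [NormedSpace ℝ E] (L : (ι → ℝ) →ₗ[ℝ] E) :
    IsClosed (L '' {c | ∀ i, 0 ≤ c i}) := by
  classical
  have key : L '' {c | ∀ i, 0 ≤ c i} =
      {x : E | ∃ c : ι → ℝ, (∀ i, 0 ≤ c i) ∧ x = ∑ i, c i • L (Pi.single i 1)} := by
    have hdecomp : ∀ c : ι → ℝ, L c = ∑ i, c i • L (Pi.single i 1) := by
      intro c
      have : c = ∑ i, c i • (Pi.single i 1 : ι → ℝ) := by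
        funext j
        simp [Finset.sum_apply, Pi.single_apply, mul_ite]
      conv_lhs => rw [this]
      rw [map_sum]
      simp
    ext x
    constructor
    · rintro ⟨c, hc, rfl⟩
      exact ⟨c, hc, hdecomp c⟩
    · rintro ⟨c, hc, rfl⟩
      exact ⟨c, hc, hdecomp c⟩
  rw [key]
  exact isClosed_finite_cone _

/-- `cutWeight` as a linear map. -/
noncomputable def cutLin (n : ℕ) (S : Finset (Fin n)) : (EdgeSlot n → ℝ) →ₗ[ℝ] ℝ where
  toFun w := cutWeight n w S
  map_add' a b := by
    simp only [cutWeight, Pi.add_apply]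
    rw [← Finset.sum_add_distrib]
    exact Finset.sum_congr rfl fun e _ => by split <;> simp
  map_smul' m a := by
    simp only [cutWeight, Pi.smul_apply, smul_eq_mul, RingHom.id_apply]
    rw [Finset.mul_sum]
    exact Finset.sum_congr rfl fun e _ => by split <;> simp

lemma cutWeight_nonneg (n : ℕ) (w : EdgeSlot n → ℝ) (hw : ∀ e, 0 ≤ w e)
    (S : Finset (Fin n)) : 0 ≤ cutWeight n w S :=
  Finset.sum_nonneg fun e _ => by split <;> simp [hw e]

/-- If `A` is a connectivity certificate for a connected graph `G = (V, w)`, then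
there is a `τ > 0` such that every nonnegative `w'` consistent with the query
answers satisfies `λ(V, w') ≥ τ`. -/
theorem connectivity_certificate_uniform_lower_bound (n k : ℕ) (w : EdgeSlot n → ℝ)
    (hw : ∀ e, 0 ≤ w e) (hconn : 0 < minCutVal n w)
    (A : Matrix (Fin k) (EdgeSlot n) ℝ)
    (hA : ∀ w' : EdgeSlot n → ℝ, (∀ e, 0 ≤ w' e) → A.mulVec w' = A.mulVec w →
      0 < minCutVal n w') :
    ∃ τ : ℝ, 0 < τ ∧ ∀ w' : EdgeSlot n → ℝ, (∀ e, 0 ≤ w' e) →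
      A.mulVec w' = A.mulVec w → τ ≤ minCutVal n w' := by
  classical
  set 𝒮 : Finset (Finset (Fin n)) :=
    Finset.univ.filter (fun S => S.Nonempty ∧ S ≠ Finset.univ) with h𝒮
  have hne : 𝒮.Nonempty := by
    by_contra h
    rw [Finset.not_nonempty_iff_eq_empty] at h
    have hemp : {x : ℝ | ∃ S : Finset (Fin n), S.Nonempty ∧ S ≠ Finset.univ ∧
        cutWeight n w S = x} = ∅ := by
      ext x
      simp only [Set.mem_setOf_eq, Set.mem_empty_iff_false, iff_false]
      rintro ⟨S, h1, h2, -⟩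
      have : S ∈ 𝒮 := by simp [h𝒮, h1, h2]
      simp [h] at this
    rw [minCutVal, hemp, Real.sInf_empty] at hconn
    exact lt_irrefl 0 hconn
  -- bddBelow facts
  have hbdd : ∀ w' : EdgeSlot n → ℝ, (∀ e, 0 ≤ w' e) →
      BddBelow {x : ℝ | ∃ S : Finset (Fin n), S.Nonempty ∧ S ≠ Finset.univ ∧
        cutWeight n w' S = x} := by
    intro w' hw'
    refine ⟨0, ?_⟩
    rintro x ⟨S, -, -, rfl⟩
    exact cutWeight_nonneg n w' hw' S
  -- per-shore infimum
  set V : Finset (Fin n) → Set ℝ := fun S =>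
    {x : ℝ | ∃ w' : EdgeSlot n → ℝ, (∀ e, 0 ≤ w' e) ∧ A.mulVec w' = A.mulVec w ∧
      cutWeight n w' S = x} with hV
  have hVne : ∀ S, (V S).Nonempty := fun S => ⟨_, w, hw, rfl, rfl⟩
  have hVbdd : ∀ S, BddBelow (V S) := by
    intro S
    refine ⟨0, ?_⟩
    rintro x ⟨w', hw', -, rfl⟩
    exact cutWeight_nonneg n w' hw' S
  have hpos : ∀ S ∈ 𝒮, 0 < sInf (V S) := by
    intro S hS
    rw [h𝒮, Finset.mem_filter] at hS
    by_contra hc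
    push_neg at hc
    have hc0 : sInf (V S) = 0 := le_antisymm hc (le_csInf (hVne S) (by
      rintro x ⟨w', hw', -, rfl⟩
      exact cutWeight_nonneg n w' hw' S))
    -- the image of the orthant under (A.mulVec ·, cutWeight · S) is closed
    set L : (EdgeSlot n → ℝ) →ₗ[ℝ] ((Fin k → ℝ) × ℝ) :=
      (Matrix.mulVecLin A).prod (cutLin n S) with hL
    have hclosed := isClosed_image_orthant L
    have hmem : ((A.mulVec w, 0) : (Fin k → ℝ) × ℝ) ∈ L '' {c | ∀ i, 0 ≤ c i} := by
      rw [← hclosed.closure_eq]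
      rw [Metric.mem_closure_iff]
      intro ε hε
      have : sInf (V S) < ε := by rw [hc0]; exact hε
      obtain ⟨x, hx, hxε⟩ := exists_lt_of_csInf_lt (hVne S) this
      obtain ⟨w', hw', hAw', rfl⟩ := hx
      refine ⟨L w', ⟨w', hw', rfl⟩, ?_⟩
      have hx0 : 0 ≤ cutWeight n w' S := cutWeight_nonneg n w' hw' S
      have hLw' : L w' = (A.mulVec w, cutWeight n w' S) := by
        rw [hL]
        ext <;> simp [Matrix.mulVecLin_apply, hAw', cutLin]
      rw [hLw', Prod.dist_eq]
      simp only [dist_self]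
      rw [Real.dist_eq]
      have : |(0 : ℝ) - cutWeight n w' S| = cutWeight n w' S := by
        rw [zero_sub, abs_neg, abs_of_nonneg hx0]
      rw [this]
      exact max_lt hε hxε
    obtain ⟨w'', hw'', heq⟩ := hmem
    have h1 : A.mulVec w'' = A.mulVec w := by
      have := congrArg Prod.fst heq
      simpa [hL, Matrix.mulVecLin_apply] using this
    have h2 : cutWeight n w'' S = 0 := by
      have := congrArg Prod.snd heq
      simpa [hL, cutLin] using this
    have h3 := hA w'' hw'' h1
    have h4 : minCutVal n w'' ≤ 0 := by
      rw [← h2]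
      exact csInf_le (hbdd w'' hw'') ⟨S, hS.2.1, hS.2.2, rfl⟩
    linarith
  set τ : ℝ := 𝒮.inf' hne (fun S => sInf (V S)) with hτ
  refine ⟨τ, ?_, ?_⟩
  · rw [hτ, Finset.lt_inf'_iff]
    exact hpos
  · intro w' hw' hAw'
    apply le_csInf
    · obtain ⟨S₀, hS₀⟩ := hne
      rw [h𝒮, Finset.mem_filter] at hS₀
      exact ⟨_, S₀, hS₀.2.1, hS₀.2.2, rfl⟩
    · rintro x ⟨S, h1, h2, rfl⟩
      have hS𝒮 : S ∈ 𝒮 := by simp [h𝒮, h1, h2]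
      calc τ ≤ sInf (V S) := Finset.inf'_le _ hS𝒮
        _ ≤ cutWeight n w' S := csInf_le (hVbdd S) ⟨w', hw', hAw', rfl⟩
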